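/- For α ∈ (0,1], real constants c₁, c₂, and t > 0, the function y(t) = exp(−t^α/(2α))·(c₁ cos(√3 t^α/(2α)) + c₂ sin(√3 t^α/(2α))) satisfies ²T_α y + T_α y + y = 0. -/

import Mathlib

noncomputable def condD (α : ℝ) (f : ℝ → ℝ) : ℝ → ℝ := fun t => t ^ (1 - α) * deriv f t

lemma key_deriv (α : ℝ) (hα0 : 0 < α) (a b x : ℝ) (hx : 0 < x) :
    HasDerivAt (fun x : ℝ => Real.exp (-x ^ α / (2 * α)) *
        (a * Real.cos (Real.sqrt 3 * x ^ α / (2 * α)) +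
         b * Real.sin (Real.sqrt 3 * x ^ α / (2 * α))))
      (x ^ (α - 1) * (Real.exp (-x ^ α / (2 * α)) *
        ((Real.sqrt 3 * b - a) / 2 * Real.cos (Real.sqrt 3 * x ^ α / (2 * α)) +
         -(Real.sqrt 3 * a + b) / 2 * Real.sin (Real.sqrt 3 * x ^ α / (2 * α))))) x := by
  have hs : HasDerivAt (fun x : ℝ => x ^ α) (α * x ^ (α - 1)) x :=
    Real.hasDerivAt_rpow_const (Or.inl hx.ne')
  have h1 : HasDerivAt (fun x : ℝ => -x ^ α / (2 * α)) (-(α * x ^ (α - 1)) / (2 * α)) x :=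
    hs.neg.div_const _
  have h2 : HasDerivAt (fun x : ℝ => Real.sqrt 3 * x ^ α / (2 * α))
      (Real.sqrt 3 * (α * x ^ (α - 1)) / (2 * α)) x := (hs.const_mul _).div_const _
  have h := h1.exp.mul ((h2.cos.const_mul a).add (h2.sin.const_mul b))
  refine h.congr_deriv ?_
  simp only [Pi.add_apply]
  field_simp
  ring

lemma condD_eq (α : ℝ) (hα0 : 0 < α) (a b t : ℝ) (ht : 0 < t) :
    condD α (fun x => Real.exp (-x ^ α / (2 * α)) *
        (a * Real.cos (Real.sqrt 3 * x ^ α / (2 * α)) +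
         b * Real.sin (Real.sqrt 3 * x ^ α / (2 * α)))) t
    = Real.exp (-t ^ α / (2 * α)) *
        ((Real.sqrt 3 * b - a) / 2 * Real.cos (Real.sqrt 3 * t ^ α / (2 * α)) +
         -(Real.sqrt 3 * a + b) / 2 * Real.sin (Real.sqrt 3 * t ^ α / (2 * α))) := by
  unfold condD
  rw [(key_deriv α hα0 a b t ht).deriv, ← mul_assoc, ← Real.rpow_add ht,
    show (1 - α) + (α - 1) = 0 by ring, Real.rpow_zero, one_mul]

theorem stmt_12 (α : ℝ) (hα : α ∈ Set.Ioc (0:ℝ) 1) (c₁ c₂ : ℝ) (t : ℝ) (ht : 0 < t) :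
    (condD α)^[2] (fun x => Real.exp (-x ^ α / (2 * α)) *
        (c₁ * Real.cos (Real.sqrt 3 * x ^ α / (2 * α)) +
         c₂ * Real.sin (Real.sqrt 3 * x ^ α / (2 * α)))) t
      + condD α (fun x => Real.exp (-x ^ α / (2 * α)) *
        (c₁ * Real.cos (Real.sqrt 3 * x ^ α / (2 * α)) +
         c₂ * Real.sin (Real.sqrt 3 * x ^ α / (2 * α)))) t
      + Real.exp (-t ^ α / (2 * α)) *
        (c₁ * Real.cos (Real.sqrt 3 * t ^ α / (2 * α)) +
         c₂ * Real.sin (Real.sqrt 3 * t ^ α / (2 * α))) = 0 := by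
  obtain ⟨hα0, -⟩ := hα
  set d₁ := (Real.sqrt 3 * c₂ - c₁) / 2 with hd₁
  set d₂ := -(Real.sqrt 3 * c₁ + c₂) / 2 with hd₂
  have hev : condD α (fun x => Real.exp (-x ^ α / (2 * α)) *
        (c₁ * Real.cos (Real.sqrt 3 * x ^ α / (2 * α)) +
         c₂ * Real.sin (Real.sqrt 3 * x ^ α / (2 * α))))
      =ᶠ[nhds t] (fun x => Real.exp (-x ^ α / (2 * α)) *
        (d₁ * Real.cos (Real.sqrt 3 * x ^ α / (2 * α)) +
         d₂ * Real.sin (Real.sqrt 3 * x ^ α / (2 * α)))) := by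
    filter_upwards [isOpen_Ioi.mem_nhds ht] with x hx
    exact condD_eq α hα0 c₁ c₂ x hx
  have h2 : (condD α)^[2] (fun x => Real.exp (-x ^ α / (2 * α)) *
        (c₁ * Real.cos (Real.sqrt 3 * x ^ α / (2 * α)) +
         c₂ * Real.sin (Real.sqrt 3 * x ^ α / (2 * α)))) t
      = condD α (fun x => Real.exp (-x ^ α / (2 * α)) *
        (d₁ * Real.cos (Real.sqrt 3 * x ^ α / (2 * α)) +
         d₂ * Real.sin (Real.sqrt 3 * x ^ α / (2 * α)))) t := by
    rw [Function.iterate_succ_apply', Function.iterate_one]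
    show t ^ (1 - α) * deriv _ t = t ^ (1 - α) * deriv _ t
    rw [hev.deriv_eq]
  rw [h2, condD_eq α hα0 d₁ d₂ t ht, condD_eq α hα0 c₁ c₂ t ht, hd₁, hd₂]
  have h3 : Real.sqrt 3 * Real.sqrt 3 = 3 := Real.mul_self_sqrt (by norm_num)
  linear_combination -(Real.exp (-t ^ α / (2 * α)) *
    (c₁ * Real.cos (Real.sqrt 3 * t ^ α / (2 * α)) +
     c₂ * Real.sin (Real.sqrt 3 * t ^ α / (2 * α))) / 4) * h3
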